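/- There exists a constant c > 0 such that for every integer n ≥ 4 there is a set P_n of n points in the plane in general position for which, for each k ∈ {2, 3, 4}, the number of (4,k)-squares among P_n is at least c·n²; consequently the number of nontrivial 4-squares among P_n is at least c·n². -/

import Mathlib

open Real Set

/-- The four side labels of a square. -/
inductive SqSide : Type
  | top
  | right
  | bottom
  | left
  deriving DecidableEq

/-- A (solid, closed) square in the plane, given by its center, its radius `r`
(half the side length) and its orientation `θ`. -/
structure Square : Type where
  center : ℝ × ℝ
  r : ℝ
  θ : ℝ

namespace Square

/-- The local `x`-coordinate of a point in the rotated frame of the square. -/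
noncomputable def lx (S : Square) (p : ℝ × ℝ) : ℝ :=
  (p.1 - S.center.1) * Real.cos S.θ + (p.2 - S.center.2) * Real.sin S.θ

/-- The local `y`-coordinate of a point in the rotated frame of the square. -/
noncomputable def ly (S : Square) (p : ℝ × ℝ) : ℝ :=
  -(p.1 - S.center.1) * Real.sin S.θ + (p.2 - S.center.2) * Real.cos S.θ

/-- A valid parametrization: nonnegative radius and orientation in `[0, π/2)`.
Every geometric square (with sides parallel to the directions `θ` and `θ + π/2`
for some `θ`) has such a parametrization, which is unique when `0 < r`. -/
def Valid (S : Square) : Prop :=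
  0 ≤ S.r ∧ 0 ≤ S.θ ∧ S.θ < Real.pi / 2

/-- Membership in the closed solid square. -/
def Mem (S : Square) (p : ℝ × ℝ) : Prop :=
  |S.lx p| ≤ S.r ∧ |S.ly p| ≤ S.r

/-- The square as a subset of the plane. -/
def toSet (S : Square) : Set (ℝ × ℝ) :=
  {p | S.Mem p}

/-- Membership in the interior of the square. -/
def InteriorMem (S : Square) (p : ℝ × ℝ) : Prop :=
  |S.lx p| < S.r ∧ |S.ly p| < S.r

/-- `p` lies on the closed side of `S` labeled `a` (sides include their endpoints). -/
def OnSide (S : Square) (a : SqSide) (p : ℝ × ℝ) : Prop :=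
  match a with
  | SqSide.top    => S.ly p = S.r ∧ |S.lx p| ≤ S.r
  | SqSide.bottom => S.ly p = -S.r ∧ |S.lx p| ≤ S.r
  | SqSide.right  => S.lx p = S.r ∧ |S.ly p| ≤ S.r
  | SqSide.left   => S.lx p = -S.r ∧ |S.ly p| ≤ S.r

/-- `p` lies on the boundary of `S`. -/
def OnBoundary (S : Square) (p : ℝ × ℝ) : Prop :=
  ∃ a : SqSide, S.OnSide a p

/-- `S` is a square in orientation `φ`, i.e. its sides are parallel to the
directions `φ` and `φ + π/2` (orientations are taken modulo `π/2`). -/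
def InOrientation (S : Square) (φ : ℝ) : Prop :=
  ∃ k : ℤ, φ - S.θ = (k : ℝ) * (Real.pi / 2)

/-- The opposite side label. -/
def _root_.SqSide.opp : SqSide → SqSide
  | SqSide.top => SqSide.bottom
  | SqSide.bottom => SqSide.top
  | SqSide.left => SqSide.right
  | SqSide.right => SqSide.left

end Square

/-- The set of contact pairs of the square `S` with respect to the point set `P`:
pairs `(p, a)` with `p ∈ P` lying on the side of `S` labeled `a`. -/
def contactPairs (P : Finset (ℝ × ℝ)) (S : Square) : Set ((ℝ × ℝ) × SqSide) :=
  {pa | pa.1 ∈ P ∧ S.OnSide pa.2 pa.1}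

/-- The set of contact points of `S`: points of `P` on the boundary of `S`. -/
def contactPoints (P : Finset (ℝ × ℝ)) (S : Square) : Set (ℝ × ℝ) :=
  {p | p ∈ P ∧ S.OnBoundary p}

/-- `S` is an empty square among `P`: a (validly parametrized) square whose
interior contains no point of `P`. -/
def IsEmptySquare (P : Finset (ℝ × ℝ)) (S : Square) : Prop :=
  S.Valid ∧ ∀ p ∈ P, ¬ S.InteriorMem p

/-- `P` is in general position: no square in any orientation has five or more
contact pairs among `P`. -/
def GenPos (P : Finset (ℝ × ℝ)) : Prop :=
  ∀ S : Square, S.Valid → (contactPairs P S).ncard ≤ 4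

/-- A `4`-square: an empty square with exactly four contact pairs. -/
def Is4Square (P : Finset (ℝ × ℝ)) (S : Square) : Prop :=
  IsEmptySquare P S ∧ (contactPairs P S).ncard = 4

/-- A nontrivial `4`-square: a `4`-square which is not a degenerate
single-point square (i.e. it has positive radius). -/
def IsNontrivial4Square (P : Finset (ℝ × ℝ)) (S : Square) : Prop :=
  Is4Square P S ∧ 0 < S.r

/-- A `(4,k)`-square: a `4`-square with exactly `k` contact points. -/
def Is4kSquare (P : Finset (ℝ × ℝ)) (k : ℕ) (S : Square) : Prop :=
  Is4Square P S ∧ (contactPoints P S).ncard = k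

/-- `S` is stapled: some side of `S` contains two distinct points of `P`. -/
def IsStapled (P : Finset (ℝ × ℝ)) (S : Square) : Prop :=
  ∃ a : SqSide, ∃ p ∈ P, ∃ q ∈ P, p ≠ q ∧ S.OnSide a p ∧ S.OnSide a q

noncomputable section
namespace Quad
open Real

/-! ### The point set -/

def eps (n : ℕ) : ℝ := 1 / (8 * (n : ℝ) ^ 2)

def pt (n k : ℕ) : ℝ × ℝ := ((k : ℝ), - eps n * (k : ℝ) ^ 2)

def Pn (n : ℕ) : Finset (ℝ × ℝ) := (Finset.Icc 1 n).image (pt n)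

lemma eps_pos {n : ℕ} (hn : 1 ≤ n) : 0 < eps n := by
  have : (0:ℝ) < (n:ℝ) := by exact_mod_cast Nat.pos_of_ne_zero (by omega)
  unfold eps; positivity

lemma eps_lt_one {n : ℕ} (hn : 1 ≤ n) : eps n < 1 := by
  have h1 : (1:ℝ) ≤ (n:ℝ) := by exact_mod_cast hn
  rw [eps, div_lt_one (by nlinarith)]
  nlinarith

lemma pt_inj {n : ℕ} {a b : ℕ} (h : pt n a = pt n b) : a = b := by
  have : ((a:ℕ):ℝ) = b := congrArg Prod.fst h
  exact_mod_cast this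

lemma pt_ne {n a b : ℕ} (h : a ≠ b) : pt n a ≠ pt n b := fun hc => h (pt_inj hc)

lemma Pn_card (n : ℕ) : (Pn n).card = n := by
  rw [Pn, Finset.card_image_of_injective _ (fun a b h => pt_inj h), Nat.card_Icc]; omega

lemma mem_Pn {n : ℕ} {p : ℝ × ℝ} : p ∈ Pn n ↔ ∃ k, 1 ≤ k ∧ k ≤ n ∧ p = pt n k := by
  simp only [Pn, Finset.mem_image, Finset.mem_Icc]
  constructor
  · rintro ⟨k, ⟨h1, h2⟩, rfl⟩; exact ⟨k, h1, h2, rfl⟩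
  · rintro ⟨k, h1, h2, rfl⟩; exact ⟨k, ⟨h1, h2⟩, rfl⟩

lemma pt_mem_Pn {n k : ℕ} (h1 : 1 ≤ k) (h2 : k ≤ n) : pt n k ∈ Pn n :=
  mem_Pn.mpr ⟨k, h1, h2, rfl⟩

/-! ### Frame lemmas -/

lemma lx_sub (S : Square) (p q : ℝ × ℝ) :
    S.lx q - S.lx p = (q.1 - p.1) * Real.cos S.θ + (q.2 - p.2) * Real.sin S.θ := by
  simp only [Square.lx]; ring

lemma ly_sub (S : Square) (p q : ℝ × ℝ) :
    S.ly q - S.ly p = -(q.1 - p.1) * Real.sin S.θ + (q.2 - p.2) * Real.cos S.θ := by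
  simp only [Square.ly]; ring

lemma pyth (S : Square) (p q : ℝ × ℝ) :
    (S.lx q - S.lx p) ^ 2 + (S.ly q - S.ly p) ^ 2 = (q.1 - p.1) ^ 2 + (q.2 - p.2) ^ 2 := by
  have h := Real.sin_sq_add_cos_sq S.θ
  simp only [Square.lx, Square.ly]
  nlinarith [h]

end Quad
noncomputable section
namespace Quad
open Real

/-! ### General position -/

lemma cos_pos_of_valid {S : Square} (hS : S.Valid) : 0 < Real.cos S.θ :=
  Real.cos_pos_of_mem_Ioo ⟨by linarith [hS.2.1, Real.pi_pos], hS.2.2⟩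

lemma sin_nonneg_of_valid {S : Square} (hS : S.Valid) : 0 ≤ Real.sin S.θ :=
  Real.sin_nonneg_of_nonneg_of_le_pi hS.2.1 (by linarith [hS.2.2, Real.pi_pos])

lemma no_two_horiz {n : ℕ} (hn : 1 ≤ n) {S : Square} (hS : S.Valid)
    {a b : ℕ} (ha : 1 ≤ a) (hb : 1 ≤ b) (hab : a ≠ b)
    (h : S.ly (pt n a) = S.ly (pt n b)) : False := by
  have hε := eps_pos hn
  have hcos := cos_pos_of_valid hS
  have hsin := sin_nonneg_of_valid hS
  have hd := ly_sub S (pt n a) (pt n b)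
  rw [h, sub_self] at hd
  simp only [pt] at hd
  have hfac : ((b:ℝ) - a) * (Real.sin S.θ + eps n * ((a:ℝ) + b) * Real.cos S.θ) = 0 := by
    linear_combination hd
  have hba : ((b:ℝ) - a) ≠ 0 := by
    have : (b:ℝ) ≠ (a:ℝ) := by exact_mod_cast hab.symm
    exact sub_ne_zero.mpr this
  have h2 : Real.sin S.θ + eps n * ((a:ℝ) + b) * Real.cos S.θ = 0 :=
    (mul_eq_zero.mp hfac).resolve_left hba
  have hA : (0:ℝ) < (a:ℝ) + b := by
    have : (1:ℝ) ≤ (a:ℝ) := by exact_mod_cast ha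
    have : (1:ℝ) ≤ (b:ℝ) := by exact_mod_cast hb
    linarith
  nlinarith [mul_pos (mul_pos hε hA) hcos]

lemma two_vert {n : ℕ} (hn : 1 ≤ n) {S : Square} (hS : S.Valid)
    {a b : ℕ} (hab : a ≠ b)
    (h : S.lx (pt n a) = S.lx (pt n b)) :
    Real.cos S.θ = eps n * ((a:ℝ) + b) * Real.sin S.θ := by
  have hd := lx_sub S (pt n a) (pt n b)
  rw [h, sub_self] at hd
  simp only [pt] at hd
  have hfac : ((b:ℝ) - a) * (Real.cos S.θ - eps n * ((a:ℝ) + b) * Real.sin S.θ) = 0 := by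
    linear_combination -hd
  have hba : ((b:ℝ) - a) ≠ 0 := by
    have : (b:ℝ) ≠ (a:ℝ) := by exact_mod_cast hab.symm
    exact sub_ne_zero.mpr this
  have h2 := (mul_eq_zero.mp hfac).resolve_left hba
  linarith [h2]

/-- If a vertical side carries two distinct points, then `S.r ≥ 1/2`. -/
lemma r_ge_half {n : ℕ} {S : Square}
    {a b : ℕ} (hab : a ≠ b)
    (hx : S.lx (pt n a) = S.lx (pt n b))
    (hya : |S.ly (pt n a)| ≤ S.r) (hyb : |S.ly (pt n b)| ≤ S.r) :
    (1:ℝ) / 2 ≤ S.r := by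
  have hp := pyth S (pt n a) (pt n b)
  rw [hx, sub_self] at hp
  have hfst : (pt n b).1 - (pt n a).1 = (b:ℝ) - a := by simp [pt]
  rw [hfst] at hp
  have h1 : (1:ℝ) ≤ ((b:ℝ) - a) ^ 2 := by
    rcases lt_or_gt_of_ne hab with h | h
    · have : (a:ℝ) + 1 ≤ (b:ℝ) := by exact_mod_cast h
      nlinarith
    · have : (b:ℝ) + 1 ≤ (a:ℝ) := by exact_mod_cast h
      nlinarith
  have h2 : (1:ℝ) ≤ (S.ly (pt n b) - S.ly (pt n a)) ^ 2 := by
    nlinarith [sq_nonneg ((pt n b).2 - (pt n a).2)]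
  have h3 : |S.ly (pt n b) - S.ly (pt n a)| ≤ 2 * S.r := by
    calc |S.ly (pt n b) - S.ly (pt n a)| ≤ |S.ly (pt n b)| + |S.ly (pt n a)| := abs_sub _ _
    _ ≤ 2 * S.r := by linarith
  have h4 := abs_nonneg (S.ly (pt n b) - S.ly (pt n a))
  nlinarith [sq_abs (S.ly (pt n b) - S.ly (pt n a))]

/-- Cross bound: a point on the left side and a point on the right side, plus a
nearly-horizontal orientation, force a small radius. -/
lemma r_le_small {n : ℕ} (hn : 1 ≤ n) {S : Square} (hS : S.Valid)
    (hc : Real.cos S.θ ≤ 2 * n * eps n * Real.sin S.θ)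
    {a b : ℕ} (ha1 : 1 ≤ a) (han : a ≤ n) (hb1 : 1 ≤ b) (hbn : b ≤ n)
    (hu : S.lx (pt n a) = -S.r) (hv : S.lx (pt n b) = S.r) :
    S.r ≤ 3 / 16 := by
  have hε := eps_pos hn
  have hsin := sin_nonneg_of_valid hS
  have hsin1 := Real.sin_le_one S.θ
  have hcos := cos_pos_of_valid hS
  have hd := lx_sub S (pt n a) (pt n b)
  rw [hu, hv] at hd
  simp only [pt] at hd
  have hna : (1:ℝ) ≤ (a:ℝ) := by exact_mod_cast ha1
  have hnb : (1:ℝ) ≤ (b:ℝ) := by exact_mod_cast hb1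
  have hna' : (a:ℝ) ≤ n := by exact_mod_cast han
  have hnb' : (b:ℝ) ≤ n := by exact_mod_cast hbn
  have hN : (1:ℝ) ≤ (n:ℝ) := by exact_mod_cast hn
  -- 2r = Δ1 cos + Δ2 sin
  have h1 : ((b:ℝ) - a) * Real.cos S.θ ≤ (n:ℝ) * (2 * n * eps n * Real.sin S.θ) := by
    have hd1 : ((b:ℝ) - a) ≤ (n:ℝ) := by linarith
    have := mul_le_mul_of_nonneg_right hd1 hcos.le
    calc ((b:ℝ) - a) * Real.cos S.θ ≤ (n:ℝ) * Real.cos S.θ := this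
      _ ≤ (n:ℝ) * (2 * n * eps n * Real.sin S.θ) := by
          apply mul_le_mul_of_nonneg_left hc (by linarith)
  have h2 : (-(eps n) * (b:ℝ)^2 - (-(eps n) * (a:ℝ)^2)) * Real.sin S.θ
      ≤ eps n * (n:ℝ)^2 * Real.sin S.θ := by
    apply mul_le_mul_of_nonneg_right _ hsin
    have haa : (a:ℝ)^2 ≤ (n:ℝ)^2 := by nlinarith
    have h5 : eps n * (a:ℝ)^2 ≤ eps n * (n:ℝ)^2 := mul_le_mul_of_nonneg_left haa hε.le
    have h6 : 0 ≤ eps n * (b:ℝ)^2 := by positivity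
    nlinarith
  have hen : eps n * (n:ℝ)^2 = 1/8 := by
    rw [eps]; field_simp
  have h3 : 2 * S.r ≤ 3 * (eps n * (n:ℝ)^2) := by nlinarith
  rw [hen] at h3; linarith

lemma sin_pos_of_vert {n : ℕ} (hn : 1 ≤ n) {S : Square} (hS : S.Valid)
    {a b : ℕ} (hab : a ≠ b)
    (h : S.lx (pt n a) = S.lx (pt n b)) : 0 < Real.sin S.θ := by
  have h2 := two_vert hn hS hab h
  have hcos := cos_pos_of_valid hS
  have hsin := sin_nonneg_of_valid hS
  rcases hsin.lt_or_eq with h' | h'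
  · exact h'
  · rw [← h'] at h2; simp at h2; linarith

end Quad
noncomputable section
namespace Quad
open Real

theorem genPos {n : ℕ} (hn : 1 ≤ n) : GenPos (Pn n) := by
  classical
  intro S hS
  set F : SqSide → Finset (ℝ × ℝ) := fun a => (Pn n).filter (fun p => S.OnSide a p) with hF
  -- the set of contact pairs injects into the union of images
  have hcard : (contactPairs (Pn n) S).ncard ≤
      (F .top).card + (F .bottom).card + (F .left).card + (F .right).card := by
    set U : Finset ((ℝ × ℝ) × SqSide) :=
      (F .top).image (fun p => (p, SqSide.top)) ∪
      (F .bottom).image (fun p => (p, SqSide.bottom)) ∪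
      (F .left).image (fun p => (p, SqSide.left)) ∪
      (F .right).image (fun p => (p, SqSide.right)) with hU
    have hsub : contactPairs (Pn n) S ⊆ ↑U := by
      rintro ⟨p, a⟩ ⟨hp, hos⟩
      simp only [hU, Finset.coe_union, Set.mem_union, Finset.coe_image, Set.mem_image,
        Finset.mem_coe, Finset.mem_filter, hF]
      cases a
      · exact Or.inl (Or.inl (Or.inl ⟨p, ⟨hp, hos⟩, rfl⟩))
      · exact Or.inr ⟨p, ⟨hp, hos⟩, rfl⟩
      · exact Or.inl (Or.inl (Or.inr ⟨p, ⟨hp, hos⟩, rfl⟩))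
      · exact Or.inl (Or.inr ⟨p, ⟨hp, hos⟩, rfl⟩)
    calc (contactPairs (Pn n) S).ncard ≤ (↑U : Set _).ncard :=
          Set.ncard_le_ncard hsub (Finset.finite_toSet U)
      _ = U.card := Set.ncard_coe_finset U
      _ ≤ (F .top).card + (F .bottom).card + (F .left).card + (F .right).card := by
          refine le_trans (Finset.card_union_le _ _) ?_
          have h1 := Finset.card_union_le
            ((F .top).image (fun p => (p, SqSide.top)) ∪
              (F .bottom).image (fun p => (p, SqSide.bottom)))
            ((F .left).image (fun p => (p, SqSide.left)))
          have h2 := Finset.card_union_le ((F .top).image (fun p => (p, SqSide.top)))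
            ((F .bottom).image (fun p => (p, SqSide.bottom)))
          have i1 := Finset.card_image_le (s := F .top) (f := fun p => (p, SqSide.top))
          have i2 := Finset.card_image_le (s := F .bottom) (f := fun p => (p, SqSide.bottom))
          have i3 := Finset.card_image_le (s := F .left) (f := fun p => (p, SqSide.left))
          have i4 := Finset.card_image_le (s := F .right) (f := fun p => (p, SqSide.right))
          omega
  -- horizontal sides have at most one point each
  have htop : (F .top).card ≤ 1 := by
    refine Finset.card_le_one.mpr (fun p hp q hq => ?_)
    simp only [hF, Finset.mem_filter] at hp hq
    obtain ⟨a, ha1, han, rfl⟩ := mem_Pn.mp hp.1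
    obtain ⟨b, hb1, hbn, rfl⟩ := mem_Pn.mp hq.1
    by_contra hne
    exact no_two_horiz hn hS ha1 hb1 (fun h => hne (by rw [h])) (hp.2.1.trans hq.2.1.symm)
  have hbot : (F .bottom).card ≤ 1 := by
    refine Finset.card_le_one.mpr (fun p hp q hq => ?_)
    simp only [hF, Finset.mem_filter] at hp hq
    obtain ⟨a, ha1, han, rfl⟩ := mem_Pn.mp hp.1
    obtain ⟨b, hb1, hbn, rfl⟩ := mem_Pn.mp hq.1
    by_contra hne
    exact no_two_horiz hn hS ha1 hb1 (fun h => hne (by rw [h])) (hp.2.1.trans hq.2.1.symm)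
  -- vertical sides: together at most two points
  have hlr : (F .left).card + (F .right).card ≤ 2 := by
    -- helper: a vertical side with two distinct points kills the other side and caps itself
    by_cases hone : (F .left).card ≤ 1 ∧ (F .right).card ≤ 1
    · omega
    · -- some vertical side has ≥ 2 points
      -- extract two distinct points with equal lx and their indices
      have key : ∀ (v : ℝ), (∀ p ∈ Pn n, S.OnSide SqSide.left p → S.lx p = v) → True := fun _ _ => trivial
      -- we handle the two cases symmetrically via a local lemma
      have main : ∀ (G H : Finset (ℝ × ℝ)) (vG vH : ℝ),
          (∀ p, p ∈ G ↔ p ∈ Pn n ∧ S.lx p = vG ∧ |S.ly p| ≤ S.r) →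
          (∀ p, p ∈ H ↔ p ∈ Pn n ∧ S.lx p = vH ∧ |S.ly p| ≤ S.r) →
          ((vG = -S.r ∧ vH = S.r) ∨ (vG = S.r ∧ vH = -S.r)) →
          2 ≤ G.card → G.card + H.card ≤ 2 := by
        intro G H vG vH hG hH hOR h2
        obtain ⟨p, hp, q, hq, hpq⟩ := Finset.one_lt_card.mp h2
        obtain ⟨a, ha1, han, rfl⟩ := mem_Pn.mp ((hG p).mp hp).1
        obtain ⟨b, hb1, hbn, rfl⟩ := mem_Pn.mp ((hG q).mp hq).1
        have hab : a ≠ b := fun h => hpq (by rw [h])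
        have hlxab : S.lx (pt n a) = S.lx (pt n b) :=
          (((hG _).mp hp).2.1).trans ((((hG _).mp hq).2.1)).symm
        have hsinpos := sin_pos_of_vert hn hS hab hlxab
        have hvc := two_vert hn hS hab hlxab
        have hrhalf := r_ge_half hab hlxab (((hG _).mp hp).2.2) (((hG _).mp hq).2.2)
        -- cos θ ≤ 2 n ε sin θ
        have hcle : Real.cos S.θ ≤ 2 * n * eps n * Real.sin S.θ := by
          have hA : (a:ℝ) + b ≤ 2 * n := by
            have h1 : (a:ℝ) ≤ n := by exact_mod_cast han
            have h2' : (b:ℝ) ≤ n := by exact_mod_cast hbn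
            linarith
          rw [hvc]
          have hε := eps_pos hn
          have hkey := mul_le_mul_of_nonneg_right
            (mul_le_mul_of_nonneg_left hA hε.le) hsinpos.le
          nlinarith [hkey]
        -- H must be empty
        have hHempty : H = ∅ := by
          by_contra hne
          obtain ⟨v, hv⟩ := Finset.nonempty_iff_ne_empty.mpr hne
          obtain ⟨c, hc1, hcn, rfl⟩ := mem_Pn.mp ((hH v).mp hv).1
          rcases hOR with ⟨hvG, hvH⟩ | ⟨hvG, hvH⟩
          · have hlu : S.lx (pt n a) = -S.r := by rw [((hG _).mp hp).2.1, hvG]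
            have hlv : S.lx (pt n c) = S.r := by rw [((hH _).mp hv).2.1, hvH]
            have := r_le_small hn hS hcle ha1 han hc1 hcn hlu hlv
            linarith
          · have hlu : S.lx (pt n c) = -S.r := by rw [((hH _).mp hv).2.1, hvH]
            have hlv : S.lx (pt n a) = S.r := by rw [((hG _).mp hp).2.1, hvG]
            have := r_le_small hn hS hcle hc1 hcn ha1 han hlu hlv
            linarith
        -- G has at most 2 points
        have hG2 : G.card ≤ 2 := by
          by_contra hg
          push_neg at hg
          obtain ⟨p₁, hp₁, p₂, hp₂, p₃, hp₃, h12, h13, h23⟩ := Finset.two_lt_card.mp hg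
          obtain ⟨a₁, ha₁, han₁, rfl⟩ := mem_Pn.mp ((hG _).mp hp₁).1
          obtain ⟨a₂, ha₂, han₂, rfl⟩ := mem_Pn.mp ((hG _).mp hp₂).1
          obtain ⟨a₃, ha₃, han₃, rfl⟩ := mem_Pn.mp ((hG _).mp hp₃).1
          have e12 : a₁ ≠ a₂ := fun h => h12 (by rw [h])
          have e13 : a₁ ≠ a₃ := fun h => h13 (by rw [h])
          have e23 : a₂ ≠ a₃ := fun h => h23 (by rw [h])
          have l12 : S.lx (pt n a₁) = S.lx (pt n a₂) :=
            (((hG _).mp hp₁).2.1).trans ((((hG _).mp hp₂).2.1)).symm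
          have l13 : S.lx (pt n a₁) = S.lx (pt n a₃) :=
            (((hG _).mp hp₁).2.1).trans ((((hG _).mp hp₃).2.1)).symm
          have v12 := two_vert hn hS e12 l12
          have v13 := two_vert hn hS e13 l13
          have hε := eps_pos hn
          have : (a₂:ℝ) = a₃ := by
            have h0 : eps n * ((a₁:ℝ) + a₂) * Real.sin S.θ
                = eps n * ((a₁:ℝ) + a₃) * Real.sin S.θ := by rw [← v12, ← v13]
            have := mul_right_cancel₀ (ne_of_gt hsinpos) h0
            have := mul_left_cancel₀ (ne_of_gt hε) this
            linarith
          exact e23 (by exact_mod_cast this)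
        have hH0 : H.card = 0 := by simp [hHempty]
        omega
      have hGleft : ∀ p, p ∈ F .left ↔ p ∈ Pn n ∧ S.lx p = -S.r ∧ |S.ly p| ≤ S.r := by
        intro p; simp [hF, Finset.mem_filter, Square.OnSide]; exact Finset.mem_filter (p := fun a => S.OnSide SqSide.left a)
      have hGright : ∀ p, p ∈ F .right ↔ p ∈ Pn n ∧ S.lx p = S.r ∧ |S.ly p| ≤ S.r := by
        intro p; simp [hF, Finset.mem_filter, Square.OnSide]; exact Finset.mem_filter (p := fun a => S.OnSide SqSide.right a)
      by_cases hL : 2 ≤ (F SqSide.left).card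
      · exact main (F SqSide.left) (F SqSide.right) (-S.r) S.r hGleft hGright
          (Or.inl ⟨rfl, rfl⟩) hL
      · have hR : 2 ≤ (F SqSide.right).card := by omega
        have := main (F SqSide.right) (F SqSide.left) S.r (-S.r) hGright hGleft
          (Or.inr ⟨rfl, rfl⟩) hR
        omega
  omega
end Quad

noncomputable section
namespace Quad
open Real

/-! ### Construction of the squares -/

section Build
variable (n i j : ℕ)

def tv : ℝ := eps n * ((i:ℝ) + (j:ℝ))
def wv : ℝ := Real.sqrt (1 + tv n i j ^ 2)
def Af (x : ℝ) : ℝ := eps n * (x - (i:ℝ)) * ((j:ℝ) - x)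
def Bf (x : ℝ) : ℝ := (x - (i:ℝ)) * (1 + eps n * tv n i j * (x + (i:ℝ)))

def mkSq (r β : ℝ) : Square where
  center := ((i:ℝ) - (r * tv n i j - β) / wv n i j,
             - eps n * (i:ℝ)^2 - (r + β * tv n i j) / wv n i j)
  r := r
  θ := Real.pi / 2 - Real.arctan (tv n i j)

variable {n i j}

lemma tv_pos (hn : 1 ≤ n) (hi : 1 ≤ i) : 0 < tv n i j := by
  have hε := eps_pos hn
  have h1 : (1:ℝ) ≤ (i:ℝ) := by exact_mod_cast hi
  have h0 : (0:ℝ) ≤ (j:ℝ) := by positivity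
  unfold tv; nlinarith

lemma wv_pos : 0 < wv n i j := Real.sqrt_pos.mpr (by positivity)

lemma wv_sq : wv n i j ^ 2 = 1 + tv n i j ^ 2 :=
  Real.sq_sqrt (by positivity)

lemma cos_mk (r β : ℝ) : Real.cos (mkSq n i j r β).θ = tv n i j / wv n i j := by
  show Real.cos (Real.pi / 2 - Real.arctan (tv n i j)) = _
  rw [Real.cos_pi_div_two_sub, Real.sin_arctan]
  rfl

lemma sin_mk (r β : ℝ) : Real.sin (mkSq n i j r β).θ = 1 / wv n i j := by
  show Real.sin (Real.pi / 2 - Real.arctan (tv n i j)) = _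
  rw [Real.sin_pi_div_two_sub, Real.cos_arctan]
  rfl

lemma theta_mem (hn : 1 ≤ n) (hi : 1 ≤ i) (r β : ℝ) :
    0 ≤ (mkSq n i j r β).θ ∧ (mkSq n i j r β).θ < Real.pi / 2 := by
  constructor
  · have := Real.arctan_lt_pi_div_two (tv n i j)
    show 0 ≤ Real.pi / 2 - Real.arctan (tv n i j)
    linarith
  · have : 0 < Real.arctan (tv n i j) := by
      rw [← Real.arctan_zero]
      exact Real.arctan_strictMono (tv_pos hn hi)
    show Real.pi / 2 - Real.arctan (tv n i j) < Real.pi / 2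
    linarith

lemma lx_mk (r β : ℝ) (k : ℕ) :
    (mkSq n i j r β).lx (pt n k) = Af n i j (k:ℝ) / wv n i j + r := by
  have hw2 := wv_sq (n := n) (i := i) (j := j)
  have hw0 : wv n i j ≠ 0 := (wv_pos).ne'
  have hc := cos_mk (n := n) (i := i) (j := j) r β
  have hs := sin_mk (n := n) (i := i) (j := j) r β
  simp only [Square.lx, mkSq] at hc hs ⊢
  rw [hc, hs]
  have hw2' : wv n i j ^ 2 = 1 + (eps n * ((i:ℝ) + (j:ℝ)))^2 := by
    rw [wv_sq]; simp [tv]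
  simp only [Af, tv, pt]
  field_simp
  linear_combination (- r) * hw2'

lemma ly_mk (r β : ℝ) (k : ℕ) :
    (mkSq n i j r β).ly (pt n k) = - Bf n i j (k:ℝ) / wv n i j + β := by
  have hw2 := wv_sq (n := n) (i := i) (j := j)
  have hw0 : wv n i j ≠ 0 := (wv_pos).ne'
  have hc := cos_mk (n := n) (i := i) (j := j) r β
  have hs := sin_mk (n := n) (i := i) (j := j) r β
  simp only [Square.ly, mkSq] at hc hs ⊢
  rw [hc, hs]
  have hw2' : wv n i j ^ 2 = 1 + (eps n * ((i:ℝ) + (j:ℝ)))^2 := by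
    rw [wv_sq]; simp [tv]
  simp only [Bf, tv, pt]
  field_simp
  linear_combination (- β) * hw2'

lemma Bf_sub (x y : ℝ) :
    Bf n i j x - Bf n i j y = (x - y) * (1 + eps n * tv n i j * (x + y)) := by
  simp only [Bf]; ring

lemma Bf_strictMono (hn : 1 ≤ n) (hi : 1 ≤ i) {x y : ℝ}
    (hx : 0 ≤ x) (hy : 0 ≤ y) (hxy : x < y) :
    Bf n i j x < Bf n i j y := by
  have h := Bf_sub (n := n) (i := i) (j := j) y x
  have hε := (eps_pos hn).le
  have ht := (tv_pos (j := j) hn hi).le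
  nlinarith [mul_nonneg (mul_nonneg hε ht) (by linarith : (0:ℝ) ≤ y + x)]

lemma Bf_self : Bf n i j (i:ℝ) = 0 := by simp [Bf]

end Build

end Quad
noncomputable section
namespace Quad
open Real

lemma interior_mem {S : Square} {p : ℝ × ℝ} (h : S.InteriorMem p) : S.Mem p :=
  ⟨h.1.le, h.2.le⟩

lemma onSide_mem {S : Square} (hr : 0 ≤ S.r) {a : SqSide} {p : ℝ × ℝ}
    (h : S.OnSide a p) : S.Mem p := by
  have habs : |S.r| ≤ S.r := by rw [abs_of_nonneg hr]
  have habs' : |-S.r| ≤ S.r := by rw [abs_neg, abs_of_nonneg hr]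
  cases a
  · exact ⟨h.2, by rw [h.1]; exact habs⟩
  · exact ⟨by rw [h.1]; exact habs, h.2⟩
  · exact ⟨h.2, by rw [h.1]; exact habs'⟩
  · exact ⟨by rw [h.1]; exact habs', h.2⟩

lemma ncard_three {α : Type*} {a b c : α} (hab : a ≠ b) (hac : a ≠ c) (hbc : b ≠ c) :
    ({a, b, c} : Set α).ncard = 3 := by
  rw [Set.ncard_insert_of_notMem (by simp [hab, hac]) (Set.toFinite _), Set.ncard_pair hbc]

lemma ncard_four {α : Type*} {a b c d : α} (hab : a ≠ b) (hac : a ≠ c) (had : a ≠ d)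
    (hbc : b ≠ c) (hbd : b ≠ d) (hcd : c ≠ d) : ({a, b, c, d} : Set α).ncard = 4 := by
  rw [Set.ncard_insert_of_notMem (by simp [hab, hac, had]) (Set.toFinite _),
    ncard_three hbc hbd hcd]

lemma pair_ne_side {p : ℝ × ℝ} {a b : SqSide} (h : a ≠ b) : (p, a) ≠ (p, b) :=
  fun hc => h (congrArg Prod.snd hc)

lemma pair_ne_pt {p q : ℝ × ℝ} {a b : SqSide} (h : p ≠ q) : (p, a) ≠ (q, b) :=
  fun hc => h (congrArg Prod.fst hc)

section Squares
variable (n i j : ℕ)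

def S2 : Square := mkSq n i j (Bf n i j (j:ℝ) / (2 * wv n i j)) (Bf n i j (j:ℝ) / (2 * wv n i j))

variable {n i j}

theorem S2_props (hn : 4 ≤ n) (h2i : 2 ≤ i) (hij : i < j) (hjn : j + 1 ≤ n) :
    Is4kSquare (Pn n) 2 (S2 n i j) ∧ 0 < (S2 n i j).r ∧
      contactPoints (Pn n) (S2 n i j) = {pt n i, pt n j} := by
  have hn1 : 1 ≤ n := by omega
  have hi1 : 1 ≤ i := by omega
  have hin : i ≤ n := by omega
  have hjn' : j ≤ n := by omega
  have hε := eps_pos hn1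
  have hw : 0 < wv n i j := wv_pos
  set r2 : ℝ := Bf n i j (j:ℝ) / (2 * wv n i j) with hr2def
  have hij' : (i:ℝ) < (j:ℝ) := by exact_mod_cast hij
  have hBj : 0 < Bf n i j (j:ℝ) := by
    have := Bf_strictMono (j := j) hn1 hi1 (by positivity) (by positivity) hij'
    rwa [Bf_self] at this
  have hr2 : 0 < r2 := by positivity
  have hSr : (S2 n i j).r = r2 := rfl
  have hBfj : Bf n i j (j:ℝ) = 2 * r2 * wv n i j := by
    rw [hr2def]; field_simp
  have hlx : ∀ k : ℕ, (S2 n i j).lx (pt n k) = Af n i j (k:ℝ) / wv n i j + r2 :=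
    fun k => lx_mk _ _ k
  have hly : ∀ k : ℕ, (S2 n i j).ly (pt n k) = - Bf n i j (k:ℝ) / wv n i j + r2 :=
    fun k => ly_mk _ _ k
  have hlxi : (S2 n i j).lx (pt n i) = r2 := by rw [hlx i]; simp [Af]
  have hlyi : (S2 n i j).ly (pt n i) = r2 := by rw [hly i, Bf_self]; simp
  have hlxj : (S2 n i j).lx (pt n j) = r2 := by rw [hlx j]; simp [Af]
  have hlyj : (S2 n i j).ly (pt n j) = -r2 := by
    rw [hly j, hBfj]; field_simp; ring
  -- membership forces k = i or k = j
  have hidx : ∀ k : ℕ, 1 ≤ k → k ≤ n → (S2 n i j).Mem (pt n k) → k = i ∨ k = j := by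
    intro k hk1 hkn hm
    by_contra hcon
    push_neg at hcon
    have h3 : k < i ∨ (i < k ∧ k < j) ∨ j < k := by omega
    rcases h3 with hlt | ⟨h4, h5⟩ | hgt
    · have hck : (k:ℝ) < i := by exact_mod_cast hlt
      have hBk : Bf n i j (k:ℝ) < 0 := by
        have := Bf_strictMono (j := j) hn1 hi1 (by positivity) (by positivity) hck
        rwa [Bf_self] at this
      have hq : Bf n i j (k:ℝ) / wv n i j < 0 := div_neg_of_neg_of_pos hBk hw
      have h6 := (abs_le.mp hm.2).2
      rw [hSr] at h6
      rw [hly k, neg_div] at h6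
      linarith
    · have h4' : (i:ℝ) < k := by exact_mod_cast h4
      have h5' : (k:ℝ) < j := by exact_mod_cast h5
      have hA : 0 < Af n i j (k:ℝ) := by
        have e1 : (0:ℝ) < (k:ℝ) - i := by linarith
        have e2 : (0:ℝ) < (j:ℝ) - k := by linarith
        have : Af n i j (k:ℝ) = eps n * ((k:ℝ) - i) * ((j:ℝ) - k) := rfl
        rw [this]; positivity
      have hq : 0 < Af n i j (k:ℝ) / wv n i j := by positivity
      have h6 := (abs_le.mp hm.1).2
      rw [hSr] at h6
      rw [hlx k] at h6
      linarith
    · have hck : (j:ℝ) < k := by exact_mod_cast hgt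
      have hBk : Bf n i j (j:ℝ) < Bf n i j (k:ℝ) :=
        Bf_strictMono hn1 hi1 (by positivity) (by positivity) hck
      rw [hBfj] at hBk
      have hq : 2 * r2 < Bf n i j (k:ℝ) / wv n i j := by
        rw [lt_div_iff₀ hw]; nlinarith
      have h6 := (abs_le.mp hm.2).1
      rw [hSr] at h6
      rw [hly k, neg_div] at h6
      linarith
  have hvalid : (S2 n i j).Valid :=
    ⟨le_of_lt hr2, (theta_mem hn1 hi1 _ _).1, (theta_mem hn1 hi1 _ _).2⟩
  have hpairs : contactPairs (Pn n) (S2 n i j) =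
      {(pt n i, SqSide.top), (pt n i, SqSide.right),
       (pt n j, SqSide.right), (pt n j, SqSide.bottom)} := by
    ext ⟨p, a⟩
    constructor
    · rintro ⟨hp, hos⟩
      obtain ⟨k, hk1, hkn, rfl⟩ := mem_Pn.mp hp
      rcases hidx k hk1 hkn (onSide_mem (le_of_lt hr2) hos) with rfl | rfl
      · cases a
        · simp
        · simp
        · exfalso
          have := hos.1
          rw [hlyi, hSr] at this
          linarith
        · exfalso
          have := hos.1
          rw [hlxi, hSr] at this
          linarith
      · cases a
        · exfalso
          have := hos.1
          rw [hlyj, hSr] at this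
          linarith
        · simp
        · simp
        · exfalso
          have := hos.1
          rw [hlxj, hSr] at this
          linarith
    · intro hmem
      simp only [Set.mem_insert_iff, Set.mem_singleton_iff, Prod.mk.injEq] at hmem
      have habs2 : |r2| ≤ r2 := by rw [abs_of_nonneg hr2.le]
      have habs2' : |-r2| ≤ r2 := by rw [abs_neg, abs_of_nonneg hr2.le]
      rcases hmem with ⟨hq, ha⟩ | ⟨hq, ha⟩ | ⟨hq, ha⟩ | ⟨hq, ha⟩ <;> subst hq ha
      · exact ⟨pt_mem_Pn hi1 hin, by rw [Square.OnSide, hlyi, hlxi, hSr]; exact ⟨rfl, habs2⟩⟩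
      · exact ⟨pt_mem_Pn hi1 hin, by rw [Square.OnSide, hlyi, hlxi, hSr]; exact ⟨rfl, habs2⟩⟩
      · exact ⟨pt_mem_Pn (by omega) hjn', by rw [Square.OnSide, hlyj, hlxj, hSr]; exact ⟨rfl, habs2'⟩⟩
      · exact ⟨pt_mem_Pn (by omega) hjn', by rw [Square.OnSide, hlyj, hlxj, hSr]; exact ⟨rfl, habs2⟩⟩
  have hptsne : pt n i ≠ pt n j := pt_ne (by omega)
  have hpoints : contactPoints (Pn n) (S2 n i j) = {pt n i, pt n j} := by
    ext p
    constructor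
    · rintro ⟨hp, a, hos⟩
      obtain ⟨k, hk1, hkn, rfl⟩ := mem_Pn.mp hp
      rcases hidx k hk1 hkn (onSide_mem (le_of_lt hr2) hos) with rfl | rfl
      · exact Or.inl rfl
      · exact Or.inr rfl
    · rintro (rfl | rfl)
      · exact ⟨pt_mem_Pn hi1 hin, SqSide.top, by
          rw [Square.OnSide, hlyi, hlxi, hSr]
          exact ⟨rfl, by rw [abs_of_nonneg hr2.le]⟩⟩
      · exact ⟨pt_mem_Pn (by omega) hjn', SqSide.bottom, by
          rw [Square.OnSide, hlyj, hlxj, hSr]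
          exact ⟨rfl, by rw [abs_of_nonneg hr2.le]⟩⟩
  have hempty : IsEmptySquare (Pn n) (S2 n i j) := by
    refine ⟨hvalid, fun p hp hint => ?_⟩
    obtain ⟨k, hk1, hkn, rfl⟩ := mem_Pn.mp hp
    rcases hidx k hk1 hkn (interior_mem hint) with rfl | rfl
    · have := hint.1
      rw [hlxi, hSr, abs_of_nonneg hr2.le] at this
      exact lt_irrefl _ this
    · have := hint.1
      rw [hlxj, hSr, abs_of_nonneg hr2.le] at this
      exact lt_irrefl _ this
  refine ⟨⟨⟨hempty, ?_⟩, ?_⟩, hr2, hpoints⟩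
  · rw [hpairs]
    exact ncard_four (pair_ne_side (by simp)) (pair_ne_pt hptsne) (pair_ne_pt hptsne)
      (pair_ne_pt hptsne) (pair_ne_pt hptsne) (pair_ne_side (by simp))
  · rw [hpoints]
    exact Set.ncard_pair hptsne

end Squares
end Quad
noncomputable section
namespace Quad
open Real

section Squares3
variable (n i j : ℕ)

def S3 : Square := mkSq n i j (Bf n i j ((j:ℝ) + 1) / (2 * wv n i j))
  (Bf n i j ((j:ℝ) + 1) / (2 * wv n i j))

variable {n i j}

set_option maxHeartbeats 2000000 in
theorem S3_props (hn : 4 ≤ n) (h2i : 2 ≤ i) (hij : i < j) (hjn : j + 1 ≤ n) :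
    Is4kSquare (Pn n) 3 (S3 n i j) ∧ 0 < (S3 n i j).r ∧
      contactPoints (Pn n) (S3 n i j) = {pt n i, pt n j, pt n (j+1)} := by
  have hn1 : 1 ≤ n := by omega
  have hi1 : 1 ≤ i := by omega
  have hin : i ≤ n := by omega
  have hjn' : j ≤ n := by omega
  have hε := eps_pos hn1
  have hε1 := eps_lt_one hn1
  have ht := tv_pos (j := j) hn1 hi1
  have hw : 0 < wv n i j := wv_pos
  set r3 : ℝ := Bf n i j ((j:ℝ) + 1) / (2 * wv n i j) with hr3def
  have hij' : (i:ℝ) < (j:ℝ) := by exact_mod_cast hij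
  have hcast : ((j + 1 : ℕ) : ℝ) = (j:ℝ) + 1 := by push_cast; ring
  have hBj : 0 < Bf n i j (j:ℝ) := by
    have := Bf_strictMono (j := j) hn1 hi1 (by positivity) (by positivity) hij'
    rwa [Bf_self] at this
  have hBjj1 : Bf n i j (j:ℝ) < Bf n i j ((j:ℝ) + 1) :=
    Bf_strictMono hn1 hi1 (by positivity) (by positivity) (by linarith)
  have hBj1 : 0 < Bf n i j ((j:ℝ) + 1) := by linarith
  have hr3 : 0 < r3 := by positivity
  have hSr : (S3 n i j).r = r3 := rfl
  have hBfj1 : Bf n i j ((j:ℝ) + 1) = 2 * r3 * wv n i j := by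
    rw [hr3def]; field_simp
  have hlx : ∀ k : ℕ, (S3 n i j).lx (pt n k) = Af n i j (k:ℝ) / wv n i j + r3 :=
    fun k => lx_mk _ _ k
  have hly : ∀ k : ℕ, (S3 n i j).ly (pt n k) = - Bf n i j (k:ℝ) / wv n i j + r3 :=
    fun k => ly_mk _ _ k
  have hlxi : (S3 n i j).lx (pt n i) = r3 := by rw [hlx i]; simp [Af]
  have hlyi : (S3 n i j).ly (pt n i) = r3 := by rw [hly i, Bf_self]; simp
  have hlxj : (S3 n i j).lx (pt n j) = r3 := by rw [hlx j]; simp [Af]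
  -- p_j strictly inside the right side
  have hlyj_lt : (S3 n i j).ly (pt n j) < r3 := by
    rw [hly j, neg_div]
    have : 0 < Bf n i j (j:ℝ) / wv n i j := by positivity
    linarith
  have hlyj_gt : -r3 < (S3 n i j).ly (pt n j) := by
    rw [hly j, neg_div]
    have : Bf n i j (j:ℝ) / wv n i j < 2 * r3 := by
      rw [div_lt_iff₀ hw]; nlinarith [hBfj1]
    linarith
  -- p_(j+1) on the bottom side, strictly inside
  have hlyj1 : (S3 n i j).ly (pt n (j+1)) = -r3 := by
    rw [hly (j+1), hcast, hBfj1]; field_simp; ring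
  have hAfj1 : Af n i j ((j:ℝ)+1) = - (eps n * ((j:ℝ) + 1 - i)) := by
    show eps n * ((j:ℝ) + 1 - i) * ((j:ℝ) - ((j:ℝ)+1)) = _
    ring
  have hji1 : (0:ℝ) < (j:ℝ) + 1 - i := by linarith
  have hlxj1_lt : (S3 n i j).lx (pt n (j+1)) < r3 := by
    rw [hlx (j+1), hcast, hAfj1, neg_div]
    have : 0 < eps n * ((j:ℝ) + 1 - i) / wv n i j := by positivity
    linarith
  have hlxj1_gt : -r3 < (S3 n i j).lx (pt n (j+1)) := by
    rw [hlx (j+1), hcast, hAfj1, neg_div]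
    have hkey : eps n * ((j:ℝ) + 1 - i) < Bf n i j ((j:ℝ)+1) := by
      have hB : Bf n i j ((j:ℝ)+1) = ((j:ℝ) + 1 - i) * (1 + eps n * tv n i j * ((j:ℝ)+1+i)) := rfl
      rw [hB]
      have h1 : (0:ℝ) ≤ eps n * tv n i j * ((j:ℝ)+1+i) := by positivity
      nlinarith
    have : eps n * ((j:ℝ) + 1 - i) / wv n i j < 2 * r3 := by
      rw [div_lt_iff₀ hw]; nlinarith [hBfj1]
    linarith
  -- membership forces k ∈ {i, j, j+1}
  have hidx : ∀ k : ℕ, 1 ≤ k → k ≤ n → (S3 n i j).Mem (pt n k) →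
      k = i ∨ k = j ∨ k = j + 1 := by
    intro k hk1 hkn hm
    by_contra hcon
    push_neg at hcon
    have h3 : k < i ∨ (i < k ∧ k < j) ∨ j + 1 < k := by omega
    rcases h3 with hlt | ⟨h4, h5⟩ | hgt
    · have hck : (k:ℝ) < i := by exact_mod_cast hlt
      have hBk : Bf n i j (k:ℝ) < 0 := by
        have := Bf_strictMono (j := j) hn1 hi1 (by positivity) (by positivity) hck
        rwa [Bf_self] at this
      have hq : Bf n i j (k:ℝ) / wv n i j < 0 := div_neg_of_neg_of_pos hBk hw
      have h6 := (abs_le.mp hm.2).2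
      rw [hSr] at h6
      rw [hly k, neg_div] at h6
      linarith
    · have h4' : (i:ℝ) < k := by exact_mod_cast h4
      have h5' : (k:ℝ) < j := by exact_mod_cast h5
      have hA : 0 < Af n i j (k:ℝ) := by
        have e1 : (0:ℝ) < (k:ℝ) - i := by linarith
        have e2 : (0:ℝ) < (j:ℝ) - k := by linarith
        have : Af n i j (k:ℝ) = eps n * ((k:ℝ) - i) * ((j:ℝ) - k) := rfl
        rw [this]; positivity
      have hq : 0 < Af n i j (k:ℝ) / wv n i j := by positivity
      have h6 := (abs_le.mp hm.1).2
      rw [hSr] at h6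
      rw [hlx k] at h6
      linarith
    · have hck : (j:ℝ) + 1 < k := by exact_mod_cast hgt
      have hBk : Bf n i j ((j:ℝ)+1) < Bf n i j (k:ℝ) :=
        Bf_strictMono hn1 hi1 (by positivity) (by positivity) hck
      rw [hBfj1] at hBk
      have hq : 2 * r3 < Bf n i j (k:ℝ) / wv n i j := by
        rw [lt_div_iff₀ hw]; nlinarith
      have h6 := (abs_le.mp hm.2).1
      rw [hSr] at h6
      rw [hly k, neg_div] at h6
      linarith
  have hvalid : (S3 n i j).Valid :=
    ⟨le_of_lt hr3, (theta_mem hn1 hi1 _ _).1, (theta_mem hn1 hi1 _ _).2⟩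
  have hpairs : contactPairs (Pn n) (S3 n i j) =
      {(pt n i, SqSide.top), (pt n i, SqSide.right),
       (pt n j, SqSide.right), (pt n (j+1), SqSide.bottom)} := by
    ext ⟨p, a⟩
    constructor
    · rintro ⟨hp, hos⟩
      obtain ⟨k, hk1, hkn, rfl⟩ := mem_Pn.mp hp
      rcases hidx k hk1 hkn (onSide_mem (le_of_lt hr3) hos) with rfl | rfl | rfl
      · cases a
        · simp
        · simp
        · exfalso; have := hos.1; rw [hlyi, hSr] at this; linarith
        · exfalso; have := hos.1; rw [hlxi, hSr] at this; linarith
      · cases a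
        · exfalso; have := hos.1; rw [hSr] at this; linarith
        · simp
        · exfalso; have := hos.1; rw [hSr] at this; linarith
        · exfalso; have := hos.1; rw [hlxj, hSr] at this; linarith
      · cases a
        · exfalso; have := hos.1; rw [hlyj1, hSr] at this; linarith
        · exfalso; have := hos.1; rw [hSr] at this; linarith
        · simp
        · exfalso; have := hos.1; rw [hSr] at this; linarith
    · intro hmem
      simp only [Set.mem_insert_iff, Set.mem_singleton_iff, Prod.mk.injEq] at hmem
      have habs3 : |r3| ≤ r3 := by rw [abs_of_nonneg hr3.le]
      rcases hmem with ⟨hq, ha⟩ | ⟨hq, ha⟩ | ⟨hq, ha⟩ | ⟨hq, ha⟩ <;> subst hq ha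
      · exact ⟨pt_mem_Pn hi1 hin, by rw [Square.OnSide, hlyi, hlxi, hSr]; exact ⟨rfl, habs3⟩⟩
      · exact ⟨pt_mem_Pn hi1 hin, by rw [Square.OnSide, hlyi, hlxi, hSr]; exact ⟨rfl, habs3⟩⟩
      · refine ⟨pt_mem_Pn (by omega) hjn', ?_⟩
        rw [Square.OnSide, hlxj, hSr]
        exact ⟨rfl, abs_le.mpr ⟨by linarith, by linarith⟩⟩
      · refine ⟨pt_mem_Pn (by omega) hjn, ?_⟩
        rw [Square.OnSide, hlyj1, hSr]
        exact ⟨rfl, abs_le.mpr ⟨by linarith, by linarith⟩⟩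
  have hne_ij : pt n i ≠ pt n j := pt_ne (by omega)
  have hne_ij1 : pt n i ≠ pt n (j+1) := pt_ne (by omega)
  have hne_jj1 : pt n j ≠ pt n (j+1) := pt_ne (by omega)
  have hpoints : contactPoints (Pn n) (S3 n i j) = {pt n i, pt n j, pt n (j+1)} := by
    ext p
    constructor
    · rintro ⟨hp, a, hos⟩
      obtain ⟨k, hk1, hkn, rfl⟩ := mem_Pn.mp hp
      rcases hidx k hk1 hkn (onSide_mem (le_of_lt hr3) hos) with rfl | rfl | rfl
      · exact Or.inl rfl
      · exact Or.inr (Or.inl rfl)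
      · exact Or.inr (Or.inr rfl)
    · rintro (rfl | rfl | rfl)
      · exact ⟨pt_mem_Pn hi1 hin, SqSide.top, by
          rw [Square.OnSide, hlyi, hlxi, hSr]
          exact ⟨rfl, by rw [abs_of_nonneg hr3.le]⟩⟩
      · exact ⟨pt_mem_Pn (by omega) hjn', SqSide.right, by
          rw [Square.OnSide, hlxj, hSr]
          exact ⟨rfl, abs_le.mpr ⟨by linarith, by linarith⟩⟩⟩
      · exact ⟨pt_mem_Pn (by omega) hjn, SqSide.bottom, by
          rw [Square.OnSide, hlyj1, hSr]
          exact ⟨rfl, abs_le.mpr ⟨by linarith, by linarith⟩⟩⟩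
  have hempty : IsEmptySquare (Pn n) (S3 n i j) := by
    refine ⟨hvalid, fun p hp hint => ?_⟩
    obtain ⟨k, hk1, hkn, rfl⟩ := mem_Pn.mp hp
    rcases hidx k hk1 hkn (interior_mem hint) with rfl | rfl | rfl
    · have := hint.1
      rw [hlxi, hSr, abs_of_nonneg hr3.le] at this
      exact lt_irrefl _ this
    · have := hint.1
      rw [hlxj, hSr, abs_of_nonneg hr3.le] at this
      exact lt_irrefl _ this
    · have := hint.2
      rw [hlyj1, hSr, abs_neg, abs_of_nonneg hr3.le] at this
      exact lt_irrefl _ this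
  refine ⟨⟨⟨hempty, ?_⟩, ?_⟩, hr3, hpoints⟩
  · rw [hpairs]
    exact ncard_four (pair_ne_side (by simp)) (pair_ne_pt hne_ij) (pair_ne_pt hne_ij1)
      (pair_ne_pt hne_ij) (pair_ne_pt hne_ij1) (pair_ne_pt hne_jj1)
  · rw [hpoints]
    exact ncard_three hne_ij hne_ij1 hne_jj1

end Squares3
end Quad
noncomputable section
namespace Quad
open Real

section Squares4
variable (n i j : ℕ)

def S4 : Square :=
  mkSq n i j ((Bf n i j ((j:ℝ) + 1) - Bf n i j ((i:ℝ) - 1)) / (2 * wv n i j))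
    ((Bf n i j ((j:ℝ) + 1) - Bf n i j ((i:ℝ) - 1)) / (2 * wv n i j)
      + Bf n i j ((i:ℝ) - 1) / wv n i j)

variable {n i j}

set_option maxHeartbeats 2000000 in
theorem S4_props (hn : 4 ≤ n) (h2i : 2 ≤ i) (hij : i < j) (hjn : j + 1 ≤ n) :
    Is4kSquare (Pn n) 4 (S4 n i j) ∧ 0 < (S4 n i j).r ∧
      contactPoints (Pn n) (S4 n i j) = {pt n (i-1), pt n i, pt n j, pt n (j+1)} := by
  have hn1 : 1 ≤ n := by omega
  have hi1 : 1 ≤ i := by omega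
  have hin : i ≤ n := by omega
  have hjn' : j ≤ n := by omega
  have hε := eps_pos hn1
  have hε1 := eps_lt_one hn1
  have ht := tv_pos (j := j) hn1 hi1
  have hw : 0 < wv n i j := wv_pos
  set Bm : ℝ := Bf n i j ((i:ℝ) - 1) with hBmdef
  set Bp : ℝ := Bf n i j ((j:ℝ) + 1) with hBpdef
  set r4 : ℝ := (Bp - Bm) / (2 * wv n i j) with hr4def
  set β4 : ℝ := r4 + Bm / wv n i j with hβ4def
  have hij' : (i:ℝ) < (j:ℝ) := by exact_mod_cast hij
  have h2i' : (2:ℝ) ≤ (i:ℝ) := by exact_mod_cast h2i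
  have hcasti : ((i - 1 : ℕ) : ℝ) = (i:ℝ) - 1 := by
    rw [Nat.cast_sub hi1]; simp
  have hcastj : ((j + 1 : ℕ) : ℝ) = (j:ℝ) + 1 := by push_cast; ring
  have hdiv : ∀ X Y : ℝ, X < Y → X / wv n i j < Y / wv n i j := by
    intro X Y h
    have h2 : (X - Y) / wv n i j < 0 := div_neg_of_neg_of_pos (by linarith) hw
    rw [sub_div] at h2; linarith
  have hBm_neg : Bm < 0 := by
    have := Bf_strictMono (j := j) hn1 hi1 (by linarith) (by positivity)
      (by linarith : (i:ℝ) - 1 < (i:ℝ))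
    rw [Bf_self] at this
    rw [hBmdef]; linarith
  have hBj : 0 < Bf n i j (j:ℝ) := by
    have := Bf_strictMono (j := j) hn1 hi1 (by positivity) (by positivity) hij'
    rwa [Bf_self] at this
  have hBjp : Bf n i j (j:ℝ) < Bp :=
    Bf_strictMono hn1 hi1 (by positivity) (by positivity) (by linarith)
  have hBp_pos : 0 < Bp := by linarith
  have hr4 : 0 < r4 := by
    rw [hr4def]
    have h0 : 0 < Bp - Bm := by linarith
    positivity
  have hSr : (S4 n i j).r = r4 := rfl
  have h2rw : Bp - Bm = 2 * r4 * wv n i j := by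
    rw [hr4def]; field_simp
  have hlx : ∀ k : ℕ, (S4 n i j).lx (pt n k) = Af n i j (k:ℝ) / wv n i j + r4 :=
    fun k => lx_mk _ _ k
  have hly : ∀ k : ℕ, (S4 n i j).ly (pt n k) = - Bf n i j (k:ℝ) / wv n i j + β4 :=
    fun k => ly_mk _ _ k
  have hBpBm : Bp - Bm = ((j:ℝ) - i + 2) * (1 + eps n * tv n i j * ((i:ℝ) + j)) := by
    rw [hBpdef, hBmdef, Bf_sub]; ring_nf
  have hkey : eps n * ((j:ℝ) + 1 - i) < Bp - Bm := by
    rw [hBpBm]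
    have h1 : (0:ℝ) ≤ eps n * tv n i j * ((i:ℝ) + j) := by positivity
    nlinarith
  -- values at the four contact points
  have hly_im1 : (S4 n i j).ly (pt n (i-1)) = r4 := by
    rw [hly (i-1), hcasti, ← hBmdef, hβ4def]; field_simp; ring
  have hAf_im1 : Af n i j ((i:ℝ) - 1) = - (eps n * ((j:ℝ) + 1 - i)) := by
    show eps n * ((i:ℝ) - 1 - i) * ((j:ℝ) - ((i:ℝ) - 1)) = _
    ring
  have hlx_im1_lt : (S4 n i j).lx (pt n (i-1)) < r4 := by
    rw [hlx (i-1), hcasti, hAf_im1, neg_div]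
    have h0 : (0:ℝ) < (j:ℝ) + 1 - i := by linarith
    have : 0 < eps n * ((j:ℝ) + 1 - i) / wv n i j := by positivity
    linarith
  have hlx_im1_gt : -r4 < (S4 n i j).lx (pt n (i-1)) := by
    rw [hlx (i-1), hcasti, hAf_im1, neg_div]
    have : eps n * ((j:ℝ) + 1 - i) / wv n i j < 2 * r4 := by
      rw [div_lt_iff₀ hw]; nlinarith [h2rw]
    linarith
  have hlxi : (S4 n i j).lx (pt n i) = r4 := by rw [hlx i]; simp [Af]
  have hlyi_lt : (S4 n i j).ly (pt n i) < r4 := by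
    rw [hly i, Bf_self, hβ4def]
    have : Bm / wv n i j < 0 := div_neg_of_neg_of_pos hBm_neg hw
    simp only [neg_zero, zero_div, zero_add]
    linarith
  have hlyi_gt : -r4 < (S4 n i j).ly (pt n i) := by
    rw [hly i, Bf_self, hβ4def]
    simp only [neg_zero, zero_div, zero_add]
    have : -(2 * r4) < Bm / wv n i j := by
      rw [lt_div_iff₀ hw]; nlinarith [h2rw]
    linarith
  have hlxj : (S4 n i j).lx (pt n j) = r4 := by rw [hlx j]; simp [Af]
  have hlyj_lt : (S4 n i j).ly (pt n j) < r4 := by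
    rw [hly j, hβ4def, neg_div]
    have := hdiv Bm (Bf n i j (j:ℝ)) (by linarith)
    linarith
  have hlyj_gt : -r4 < (S4 n i j).ly (pt n j) := by
    rw [hly j, hβ4def, neg_div]
    have h5 : (Bf n i j (j:ℝ) - Bm) / wv n i j < 2 * r4 := by
      rw [div_lt_iff₀ hw]; nlinarith [h2rw]
    rw [sub_div] at h5; linarith
  have hly_j1 : (S4 n i j).ly (pt n (j+1)) = -r4 := by
    rw [hly (j+1), hcastj, ← hBpdef, hβ4def]
    have h9 : Bm / wv n i j - Bp / wv n i j = -(2*r4) := by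
      rw [div_sub_div_same, div_eq_iff hw.ne']
      linarith [h2rw]
    rw [neg_div]
    linarith [h9]
  have hAfj1 : Af n i j ((j:ℝ) + 1) = - (eps n * ((j:ℝ) + 1 - i)) := by
    show eps n * ((j:ℝ) + 1 - i) * ((j:ℝ) - ((j:ℝ) + 1)) = _
    ring
  have hlx_j1_lt : (S4 n i j).lx (pt n (j+1)) < r4 := by
    rw [hlx (j+1), hcastj, hAfj1, neg_div]
    have h0 : (0:ℝ) < (j:ℝ) + 1 - i := by linarith
    have : 0 < eps n * ((j:ℝ) + 1 - i) / wv n i j := by positivity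
    linarith
  have hlx_j1_gt : -r4 < (S4 n i j).lx (pt n (j+1)) := by
    rw [hlx (j+1), hcastj, hAfj1, neg_div]
    have : eps n * ((j:ℝ) + 1 - i) / wv n i j < 2 * r4 := by
      rw [div_lt_iff₀ hw]; nlinarith [h2rw]
    linarith
  -- membership forces k ∈ {i-1, i, j, j+1}
  have hidx : ∀ k : ℕ, 1 ≤ k → k ≤ n → (S4 n i j).Mem (pt n k) →
      k = i - 1 ∨ k = i ∨ k = j ∨ k = j + 1 := by
    intro k hk1 hkn hm
    by_contra hcon
    push_neg at hcon
    have h3 : k < i - 1 ∨ (i < k ∧ k < j) ∨ j + 1 < k := by omega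
    rcases h3 with hlt | ⟨h4, h5⟩ | hgt
    · have hck : (k:ℝ) < (i:ℝ) - 1 := by
        have : (k:ℝ) + 2 ≤ i := by exact_mod_cast (by omega : k + 2 ≤ i)
        linarith
      have hBk : Bf n i j (k:ℝ) < Bm := by
        rw [hBmdef]
        exact Bf_strictMono hn1 hi1 (by positivity) (by linarith) hck
      have h7 := hdiv (Bf n i j (k:ℝ)) Bm hBk
      have h6 := (abs_le.mp hm.2).2
      rw [hSr] at h6
      rw [hly k, hβ4def, neg_div] at h6
      linarith
    · have h4' : (i:ℝ) < k := by exact_mod_cast h4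
      have h5' : (k:ℝ) < j := by exact_mod_cast h5
      have hA : 0 < Af n i j (k:ℝ) := by
        have e1 : (0:ℝ) < (k:ℝ) - i := by linarith
        have e2 : (0:ℝ) < (j:ℝ) - k := by linarith
        have : Af n i j (k:ℝ) = eps n * ((k:ℝ) - i) * ((j:ℝ) - k) := rfl
        rw [this]; positivity
      have hq : 0 < Af n i j (k:ℝ) / wv n i j := by positivity
      have h6 := (abs_le.mp hm.1).2
      rw [hSr] at h6
      rw [hlx k] at h6
      linarith
    · have hck : (j:ℝ) + 1 < k := by exact_mod_cast hgt
      have hBk : Bp < Bf n i j (k:ℝ) := by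
        rw [hBpdef]
        exact Bf_strictMono hn1 hi1 (by positivity) (by positivity) hck
      have h5 : 2 * r4 < (Bf n i j (k:ℝ) - Bm) / wv n i j := by
        rw [lt_div_iff₀ hw]; nlinarith [h2rw]
      rw [sub_div] at h5
      have h6 := (abs_le.mp hm.2).1
      rw [hSr] at h6
      rw [hly k, hβ4def, neg_div] at h6
      linarith
  have hvalid : (S4 n i j).Valid :=
    ⟨le_of_lt hr4, (theta_mem hn1 hi1 _ _).1, (theta_mem hn1 hi1 _ _).2⟩
  have hpairs : contactPairs (Pn n) (S4 n i j) =
      {(pt n (i-1), SqSide.top), (pt n i, SqSide.right),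
       (pt n j, SqSide.right), (pt n (j+1), SqSide.bottom)} := by
    ext ⟨p, a⟩
    constructor
    · rintro ⟨hp, hos⟩
      obtain ⟨k, hk1, hkn, rfl⟩ := mem_Pn.mp hp
      rcases hidx k hk1 hkn (onSide_mem (le_of_lt hr4) hos) with rfl | rfl | rfl | rfl
      · cases a
        · simp
        · exfalso; have := hos.1; rw [hSr] at this; linarith
        · exfalso; have := hos.1; rw [hly_im1, hSr] at this; linarith
        · exfalso; have := hos.1; rw [hSr] at this; linarith
      · cases a
        · exfalso; have := hos.1; rw [hSr] at this; linarith
        · simp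
        · exfalso; have := hos.1; rw [hSr] at this; linarith
        · exfalso; have := hos.1; rw [hlxi, hSr] at this; linarith
      · cases a
        · exfalso; have := hos.1; rw [hSr] at this; linarith
        · simp
        · exfalso; have := hos.1; rw [hSr] at this; linarith
        · exfalso; have := hos.1; rw [hlxj, hSr] at this; linarith
      · cases a
        · exfalso; have := hos.1; rw [hly_j1, hSr] at this; linarith
        · exfalso; have := hos.1; rw [hSr] at this; linarith
        · simp
        · exfalso; have := hos.1; rw [hSr] at this; linarith
    · intro hmem
      simp only [Set.mem_insert_iff, Set.mem_singleton_iff, Prod.mk.injEq] at hmem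
      rcases hmem with ⟨hq, ha⟩ | ⟨hq, ha⟩ | ⟨hq, ha⟩ | ⟨hq, ha⟩ <;> subst hq ha
      · refine ⟨pt_mem_Pn (by omega) (by omega), ?_⟩
        rw [Square.OnSide, hly_im1, hSr]
        exact ⟨rfl, abs_le.mpr ⟨by linarith, by linarith⟩⟩
      · refine ⟨pt_mem_Pn hi1 hin, ?_⟩
        rw [Square.OnSide, hlxi, hSr]
        exact ⟨rfl, abs_le.mpr ⟨by linarith, by linarith⟩⟩
      · refine ⟨pt_mem_Pn (by omega) hjn', ?_⟩
        rw [Square.OnSide, hlxj, hSr]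
        exact ⟨rfl, abs_le.mpr ⟨by linarith, by linarith⟩⟩
      · refine ⟨pt_mem_Pn (by omega) hjn, ?_⟩
        rw [Square.OnSide, hly_j1, hSr]
        exact ⟨rfl, abs_le.mpr ⟨by linarith, by linarith⟩⟩
  have hne1 : pt n (i-1) ≠ pt n i := pt_ne (by omega)
  have hne2 : pt n (i-1) ≠ pt n j := pt_ne (by omega)
  have hne3 : pt n (i-1) ≠ pt n (j+1) := pt_ne (by omega)
  have hne4 : pt n i ≠ pt n j := pt_ne (by omega)
  have hne5 : pt n i ≠ pt n (j+1) := pt_ne (by omega)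
  have hne6 : pt n j ≠ pt n (j+1) := pt_ne (by omega)
  have hpoints : contactPoints (Pn n) (S4 n i j) =
      {pt n (i-1), pt n i, pt n j, pt n (j+1)} := by
    ext p
    constructor
    · rintro ⟨hp, a, hos⟩
      obtain ⟨k, hk1, hkn, rfl⟩ := mem_Pn.mp hp
      rcases hidx k hk1 hkn (onSide_mem (le_of_lt hr4) hos) with rfl | rfl | rfl | rfl
      · exact Or.inl rfl
      · exact Or.inr (Or.inl rfl)
      · exact Or.inr (Or.inr (Or.inl rfl))
      · exact Or.inr (Or.inr (Or.inr rfl))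
    · rintro (rfl | rfl | rfl | rfl)
      · exact ⟨pt_mem_Pn (by omega) (by omega), SqSide.top, by
          rw [Square.OnSide, hly_im1, hSr]
          exact ⟨rfl, abs_le.mpr ⟨by linarith, by linarith⟩⟩⟩
      · exact ⟨pt_mem_Pn hi1 hin, SqSide.right, by
          rw [Square.OnSide, hlxi, hSr]
          exact ⟨rfl, abs_le.mpr ⟨by linarith, by linarith⟩⟩⟩
      · exact ⟨pt_mem_Pn (by omega) hjn', SqSide.right, by
          rw [Square.OnSide, hlxj, hSr]
          exact ⟨rfl, abs_le.mpr ⟨by linarith, by linarith⟩⟩⟩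
      · exact ⟨pt_mem_Pn (by omega) hjn, SqSide.bottom, by
          rw [Square.OnSide, hly_j1, hSr]
          exact ⟨rfl, abs_le.mpr ⟨by linarith, by linarith⟩⟩⟩
  have hempty : IsEmptySquare (Pn n) (S4 n i j) := by
    refine ⟨hvalid, fun p hp hint => ?_⟩
    obtain ⟨k, hk1, hkn, rfl⟩ := mem_Pn.mp hp
    rcases hidx k hk1 hkn (interior_mem hint) with rfl | rfl | rfl | rfl
    · have := hint.2
      rw [hly_im1, hSr, abs_of_nonneg hr4.le] at this
      exact lt_irrefl _ this
    · have := hint.1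
      rw [hlxi, hSr, abs_of_nonneg hr4.le] at this
      exact lt_irrefl _ this
    · have := hint.1
      rw [hlxj, hSr, abs_of_nonneg hr4.le] at this
      exact lt_irrefl _ this
    · have := hint.2
      rw [hly_j1, hSr, abs_neg, abs_of_nonneg hr4.le] at this
      exact lt_irrefl _ this
  refine ⟨⟨⟨hempty, ?_⟩, ?_⟩, hr4, hpoints⟩
  · rw [hpairs]
    exact ncard_four (pair_ne_pt hne1) (pair_ne_pt hne2) (pair_ne_pt hne3)
      (pair_ne_pt hne4) (pair_ne_pt hne5) (pair_ne_pt hne6)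
  · rw [hpoints]
    exact ncard_four hne1 hne2 hne3 hne4 hne5 hne6

end Squares4
end Quad
noncomputable section
namespace Quad
open Real

lemma pt_eq_iff {n a b : ℕ} : pt n a = pt n b ↔ a = b :=
  ⟨pt_inj, by rintro rfl; rfl⟩

def Idx (n : ℕ) : Finset (ℕ × ℕ) :=
  Finset.Icc 2 (n / 4 + 1) ×ˢ Finset.Icc (n / 4 + 2) (2 * (n / 4) + 1)

lemma mem_Idx {n : ℕ} (hn : 4 ≤ n) {q : ℕ × ℕ} (hq : q ∈ Idx n) :
    2 ≤ q.1 ∧ q.1 < q.2 ∧ q.2 + 1 ≤ n ∧ q.1 ≤ n / 4 + 1 ∧ n / 4 + 2 ≤ q.2 := by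
  rw [Idx, Finset.mem_product, Finset.mem_Icc, Finset.mem_Icc] at hq
  omega

lemma Idx_card (n : ℕ) : (Idx n).card = (n / 4) * (n / 4) := by
  rw [Idx, Finset.card_product, Nat.card_Icc, Nat.card_Icc]
  have h1 : n / 4 + 1 + 1 - 2 = n / 4 := by omega
  have h2 : 2 * (n / 4) + 1 + 1 - (n / 4 + 2) = n / 4 := by omega
  rw [h1, h2]

lemma Idx_card_bound {n : ℕ} (hn : 4 ≤ n) :
    (1 / 256 : ℝ) * (n : ℝ) ^ 2 ≤ ((Idx n).card : ℝ) := by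
  rw [Idx_card]
  have h16 : n ≤ 16 * (n / 4) := by omega
  have h16' : (n : ℝ) ≤ 16 * ((n / 4 : ℕ) : ℝ) := by exact_mod_cast h16
  have h0 : (0 : ℝ) ≤ (n : ℝ) := by positivity
  push_cast
  nlinarith

theorem exists_pointset_final :
    ∃ c : ℝ, 0 < c ∧
      ∀ n : ℕ, 4 ≤ n →
        ∃ P : Finset (ℝ × ℝ), P.card = n ∧ GenPos P ∧
          (∀ k : ℕ, k = 2 ∨ k = 3 ∨ k = 4 →
            ∃ T : Finset Square, (∀ S ∈ T, Is4kSquare P k S) ∧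
              c * (n : ℝ) ^ 2 ≤ (T.card : ℝ)) ∧
          (∃ T : Finset Square, (∀ S ∈ T, IsNontrivial4Square P S) ∧
            c * (n : ℝ) ^ 2 ≤ (T.card : ℝ)) := by
  classical
  refine ⟨1 / 256, by norm_num, fun n hn => ?_⟩
  have hn1 : 1 ≤ n := by omega
  -- injectivity of the three square families
  have hinj2 : Set.InjOn (fun q : ℕ × ℕ => S2 n q.1 q.2) (Idx n) := by
    intro q hq q' hq' h
    obtain ⟨h2i, hij, hjn, hu1, hu2⟩ := mem_Idx hn hq
    obtain ⟨h2i', hij', hjn', hu1', hu2'⟩ := mem_Idx hn hq'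
    have e1 := (S2_props hn h2i hij hjn).2.2
    have e2 := (S2_props hn h2i' hij' hjn').2.2
    simp only at h
    rw [h, e2] at e1
    have m1 : pt n q.1 = pt n q'.1 ∨ pt n q.1 = pt n q'.2 := by
      have : pt n q.1 ∈ ({pt n q'.1, pt n q'.2} : Set (ℝ × ℝ)) := by
        rw [e1]; simp
      simpa using this
    have m2 : pt n q.2 = pt n q'.1 ∨ pt n q.2 = pt n q'.2 := by
      have : pt n q.2 ∈ ({pt n q'.1, pt n q'.2} : Set (ℝ × ℝ)) := by
        rw [e1]; simp
      simpa using this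
    simp only [pt_eq_iff] at m1 m2
    have : q.1 = q'.1 ∧ q.2 = q'.2 := by omega
    exact Prod.ext this.1 this.2
  have hinj3 : Set.InjOn (fun q : ℕ × ℕ => S3 n q.1 q.2) (Idx n) := by
    intro q hq q' hq' h
    obtain ⟨h2i, hij, hjn, hu1, hu2⟩ := mem_Idx hn hq
    obtain ⟨h2i', hij', hjn', hu1', hu2'⟩ := mem_Idx hn hq'
    have e1 := (S3_props hn h2i hij hjn).2.2
    have e2 := (S3_props hn h2i' hij' hjn').2.2
    simp only at h
    rw [h, e2] at e1
    have m1 : pt n q.1 = pt n q'.1 ∨ pt n q.1 = pt n q'.2 ∨ pt n q.1 = pt n (q'.2 + 1) := by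
      have : pt n q.1 ∈ ({pt n q'.1, pt n q'.2, pt n (q'.2 + 1)} : Set (ℝ × ℝ)) := by
        rw [e1]; simp
      simpa using this
    have m2 : pt n q.2 = pt n q'.1 ∨ pt n q.2 = pt n q'.2 ∨ pt n q.2 = pt n (q'.2 + 1) := by
      have : pt n q.2 ∈ ({pt n q'.1, pt n q'.2, pt n (q'.2 + 1)} : Set (ℝ × ℝ)) := by
        rw [e1]; simp
      simpa using this
    have m3 : pt n q'.2 = pt n q.1 ∨ pt n q'.2 = pt n q.2 ∨ pt n q'.2 = pt n (q.2 + 1) := by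
      have : pt n q'.2 ∈ ({pt n q.1, pt n q.2, pt n (q.2 + 1)} : Set (ℝ × ℝ)) := by
        rw [← e1]; simp
      simpa using this
    simp only [pt_eq_iff] at m1 m2 m3
    have : q.1 = q'.1 ∧ q.2 = q'.2 := by omega
    exact Prod.ext this.1 this.2
  have hinj4 : Set.InjOn (fun q : ℕ × ℕ => S4 n q.1 q.2) (Idx n) := by
    intro q hq q' hq' h
    obtain ⟨h2i, hij, hjn, hu1, hu2⟩ := mem_Idx hn hq
    obtain ⟨h2i', hij', hjn', hu1', hu2'⟩ := mem_Idx hn hq'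
    have e1 := (S4_props hn h2i hij hjn).2.2
    have e2 := (S4_props hn h2i' hij' hjn').2.2
    simp only at h
    rw [h, e2] at e1
    have m1 : pt n q.1 = pt n (q'.1 - 1) ∨ pt n q.1 = pt n q'.1 ∨
        pt n q.1 = pt n q'.2 ∨ pt n q.1 = pt n (q'.2 + 1) := by
      have : pt n q.1 ∈
          ({pt n (q'.1 - 1), pt n q'.1, pt n q'.2, pt n (q'.2 + 1)} : Set (ℝ × ℝ)) := by
        rw [e1]; simp
      simpa using this
    have m1' : pt n (q.1 - 1) = pt n (q'.1 - 1) ∨ pt n (q.1 - 1) = pt n q'.1 ∨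
        pt n (q.1 - 1) = pt n q'.2 ∨ pt n (q.1 - 1) = pt n (q'.2 + 1) := by
      have : pt n (q.1 - 1) ∈
          ({pt n (q'.1 - 1), pt n q'.1, pt n q'.2, pt n (q'.2 + 1)} : Set (ℝ × ℝ)) := by
        rw [e1]; simp
      simpa using this
    have m2 : pt n q.2 = pt n (q'.1 - 1) ∨ pt n q.2 = pt n q'.1 ∨
        pt n q.2 = pt n q'.2 ∨ pt n q.2 = pt n (q'.2 + 1) := by
      have : pt n q.2 ∈
          ({pt n (q'.1 - 1), pt n q'.1, pt n q'.2, pt n (q'.2 + 1)} : Set (ℝ × ℝ)) := by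
        rw [e1]; simp
      simpa using this
    have m3 : pt n q'.2 = pt n (q.1 - 1) ∨ pt n q'.2 = pt n q.1 ∨
        pt n q'.2 = pt n q.2 ∨ pt n q'.2 = pt n (q.2 + 1) := by
      have : pt n q'.2 ∈
          ({pt n (q.1 - 1), pt n q.1, pt n q.2, pt n (q.2 + 1)} : Set (ℝ × ℝ)) := by
        rw [← e1]; simp
      simpa using this
    have m4 : pt n q'.1 = pt n (q.1 - 1) ∨ pt n q'.1 = pt n q.1 ∨
        pt n q'.1 = pt n q.2 ∨ pt n q'.1 = pt n (q.2 + 1) := by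
      have : pt n q'.1 ∈
          ({pt n (q.1 - 1), pt n q.1, pt n q.2, pt n (q.2 + 1)} : Set (ℝ × ℝ)) := by
        rw [← e1]; simp
      simpa using this
    simp only [pt_eq_iff] at m1 m1' m2 m3 m4
    have : q.1 = q'.1 ∧ q.2 = q'.2 := by omega
    exact Prod.ext this.1 this.2
  refine ⟨Pn n, Pn_card n, genPos hn1, ?_, ?_⟩
  · rintro k (rfl | rfl | rfl)
    · refine ⟨(Idx n).image (fun q => S2 n q.1 q.2), ?_, ?_⟩
      · intro S hS
        obtain ⟨q, hq, rfl⟩ := Finset.mem_image.mp hS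
        obtain ⟨h2i, hij, hjn, _, _⟩ := mem_Idx hn hq
        exact (S2_props hn h2i hij hjn).1
      · rw [Finset.card_image_of_injOn hinj2]
        exact Idx_card_bound hn
    · refine ⟨(Idx n).image (fun q => S3 n q.1 q.2), ?_, ?_⟩
      · intro S hS
        obtain ⟨q, hq, rfl⟩ := Finset.mem_image.mp hS
        obtain ⟨h2i, hij, hjn, _, _⟩ := mem_Idx hn hq
        exact (S3_props hn h2i hij hjn).1
      · rw [Finset.card_image_of_injOn hinj3]
        exact Idx_card_bound hn
    · refine ⟨(Idx n).image (fun q => S4 n q.1 q.2), ?_, ?_⟩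
      · intro S hS
        obtain ⟨q, hq, rfl⟩ := Finset.mem_image.mp hS
        obtain ⟨h2i, hij, hjn, _, _⟩ := mem_Idx hn hq
        exact (S4_props hn h2i hij hjn).1
      · rw [Finset.card_image_of_injOn hinj4]
        exact Idx_card_bound hn
  · refine ⟨(Idx n).image (fun q => S2 n q.1 q.2), ?_, ?_⟩
    · intro S hS
      obtain ⟨q, hq, rfl⟩ := Finset.mem_image.mp hS
      obtain ⟨h2i, hij, hjn, _, _⟩ := mem_Idx hn hq
      exact ⟨(S2_props hn h2i hij hjn).1.1, (S2_props hn h2i hij hjn).2.1⟩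
    · rw [Finset.card_image_of_injOn hinj2]
      exact Idx_card_bound hn

end Quad
/-- There is a constant `c > 0` such that for every `n ≥ 4` there
is a set of `n` points in general position with at least `c * n ^ 2` many
`(4,k)`-squares for each `k ∈ {2, 3, 4}`, and consequently at least `c * n ^ 2`
nontrivial 4-squares. -/
theorem exists_pointset_with_quadratically_many_4squares :
    ∃ c : ℝ, 0 < c ∧
      ∀ n : ℕ, 4 ≤ n →
        ∃ P : Finset (ℝ × ℝ), P.card = n ∧ GenPos P ∧
          (∀ k : ℕ, k = 2 ∨ k = 3 ∨ k = 4 →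
            ∃ T : Finset Square, (∀ S ∈ T, Is4kSquare P k S) ∧
              c * (n : ℝ) ^ 2 ≤ (T.card : ℝ)) ∧
          (∃ T : Finset Square, (∀ S ∈ T, IsNontrivial4Square P S) ∧
            c * (n : ℝ) ^ 2 ≤ (T.card : ℝ)) := by
  exact Quad.exists_pointset_final
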